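/- Let A be a (unital, possibly noncommutative) ring and n a natural number. The groupoid 𝓘(Matₙ(A)) — with objects the idempotent n×n matrices over A and morphisms from e to e′ the pairs (f, g) ∈ Matₙ(A) × Matₙ(A) with fgf = f, gfg = g, gf = e, fg = e′, composed by (f′, g′) ∘ (f, g) = (f′f, gg′) — is equivalent, via e ↦ e·Aⁿ on objects and (f, g) ↦ (left multiplication by f) on morphisms, to the groupoid whose objects are the right A-modules that are direct summands of Aⁿ and whose morphisms are right A-module isomorphisms. -/

import Mathlib

universe u

/-- For an `n × n` matrix `e` over `A`, the image `e·Aⁿ` of left multiplication by `e`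
on column vectors, as a submodule of the free right `A`-module `Aⁿ` (a module over `Aᵐᵒᵖ`). -/
def matRange {A : Type u} [Ring A] {n : ℕ} (e : Matrix (Fin n) (Fin n) A) :
    Submodule Aᵐᵒᵖ (Fin n → A) where
  carrier := Set.range e.mulVec
  add_mem' := by
    rintro _ _ ⟨v, rfl⟩ ⟨w, rfl⟩
    exact ⟨v + w, by rw [Matrix.mulVec_add]⟩
  zero_mem' := ⟨0, Matrix.mulVec_zero e⟩
  smul_mem' := by
    rintro c _ ⟨v, rfl⟩
    refine ⟨c • v, ?_⟩
    ext j
    simp [Matrix.mulVec, dotProduct, Finset.sum_mul, mul_assoc,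
      MulOpposite.smul_eq_mul_unop]

namespace IdemAux

open MulOpposite

variable {A : Type u} [Ring A] {n : ℕ}

lemma mulVec_single (e : Matrix (Fin n) (Fin n) A) (j : Fin n) :
    e.mulVec (Pi.single j 1) = fun i => e i j := by
  ext i; simp [Matrix.mulVec, dotProduct, Pi.single_apply]

lemma ext_mulVec {e e' : Matrix (Fin n) (Fin n) A}
    (h : ∀ v, e.mulVec v = e'.mulVec v) : e = e' := by
  ext i j
  have h2 := h (Pi.single j 1)
  rw [mulVec_single, mulVec_single] at h2
  exact congrFun h2 i

lemma mem_matRange {e : Matrix (Fin n) (Fin n) A} {v : Fin n → A} :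
    v ∈ matRange e ↔ ∃ w, e.mulVec w = v := Iff.rfl

lemma fixed {e : Matrix (Fin n) (Fin n) A} (he : IsIdempotentElem e)
    {v : Fin n → A} (hv : v ∈ matRange e) : e.mulVec v = v := by
  obtain ⟨w, rfl⟩ := hv
  rw [Matrix.mulVec_mulVec, he]

/-- Left multiplication by `e`, as an `Aᵐᵒᵖ`-linear endomorphism of `Aⁿ`. -/
def mv (e : Matrix (Fin n) (Fin n) A) : (Fin n → A) →ₗ[Aᵐᵒᵖ] (Fin n → A) where
  toFun := e.mulVec
  map_add' := Matrix.mulVec_add e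
  map_smul' c v := by
    ext i
    simp [Matrix.mulVec, dotProduct, Finset.sum_mul, mul_assoc,
      MulOpposite.smul_eq_mul_unop]

/-- The matrix of a linear map `e·Aⁿ → e′·Aⁿ`. -/
noncomputable def fmat {e e' : Matrix (Fin n) (Fin n) A}
    (u : matRange e →ₗ[Aᵐᵒᵖ] matRange e') : Matrix (Fin n) (Fin n) A :=
  Matrix.of fun i j =>
    ((u ⟨e.mulVec (Pi.single j 1), ⟨Pi.single j 1, rfl⟩⟩ : matRange e') : Fin n → A) i

lemma repr {e e' : Matrix (Fin n) (Fin n) A}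
    (u : matRange e →ₗ[Aᵐᵒᵖ] matRange e') (x : Fin n → A) :
    (fmat u).mulVec x = ((u ⟨e.mulVec x, ⟨x, rfl⟩⟩ : matRange e') : Fin n → A) := by
  have hsub : (⟨e.mulVec x, ⟨x, rfl⟩⟩ : matRange e) =
      ∑ j, op (x j) • (⟨e.mulVec (Pi.single j 1), ⟨Pi.single j 1, rfl⟩⟩ : matRange e) := by
    apply Subtype.ext
    ext i
    simp [mulVec_single, MulOpposite.smul_eq_mul_unop, Matrix.mulVec, dotProduct,
      Finset.sum_apply]
  rw [hsub, map_sum]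
  ext i
  simp only [fmat, Matrix.of_apply, Matrix.mulVec, dotProduct]
  rw [AddSubmonoidClass.coe_finset_sum]
  simp only [map_smul, Finset.sum_apply, Submodule.coe_smul, Pi.smul_apply,
    MulOpposite.smul_eq_mul_unop, unop_op]

end IdemAux

open IdemAux MulOpposite in
/-- The groupoid `𝓘(Matₙ(A))` of idempotent `n × n` matrices and partial
isomorphisms is equivalent, via `e ↦ e·Aⁿ` on objects and `(f, g) ↦` (left multiplication
by `f`) on morphisms, to the groupoid of right `A`-modules that are direct summands
of `Aⁿ`, with right `A`-module isomorphisms as morphisms.  This is expressed by: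
the object map lands in direct summands of `Aⁿ`; the morphism map is well defined,
functorial, fully faithful on isomorphisms; and every direct summand of `Aⁿ` is
isomorphic to some `e·Aⁿ` (essential surjectivity). -/
theorem idempotent_groupoid_equiv_summands {A : Type u} [Ring A] (n : ℕ) :
    -- (i) e·Aⁿ is a direct summand of Aⁿ: the image of an idempotent endomorphism
    (∀ e : Matrix (Fin n) (Fin n) A, IsIdempotentElem e →
      ∃ π : (Fin n → A) →ₗ[Aᵐᵒᵖ] (Fin n → A),
        π ∘ₗ π = π ∧ LinearMap.range π = matRange e) ∧
    -- (ii) functoriality: identities go to identities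
    (∀ e : Matrix (Fin n) (Fin n) A, IsIdempotentElem e →
      ∀ v ∈ matRange e, e.mulVec v = v) ∧
    -- (ii') functoriality: composition goes to composition
    (∀ f f' : Matrix (Fin n) (Fin n) A, ∀ v : Fin n → A,
      (f' * f).mulVec v = f'.mulVec (f.mulVec v)) ∧
    -- (iii) a partial isomorphism (f, g) from e to e′ induces an isomorphism
    --       e·Aⁿ → e′·Aⁿ (left mult. by f) with inverse left mult. by g
    (∀ e e' f g : Matrix (Fin n) (Fin n) A,
      IsIdempotentElem e → IsIdempotentElem e' →
      f * g * f = f → g * f * g = g → g * f = e → f * g = e' →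
      (∀ v ∈ matRange e, f.mulVec v ∈ matRange e') ∧
      (∀ v ∈ matRange e', g.mulVec v ∈ matRange e) ∧
      (∀ v ∈ matRange e, g.mulVec (f.mulVec v) = v) ∧
      (∀ v ∈ matRange e', f.mulVec (g.mulVec v) = v)) ∧
    -- (iv) faithfulness
    (∀ e e' f g f' g' : Matrix (Fin n) (Fin n) A,
      IsIdempotentElem e → IsIdempotentElem e' →
      f * g * f = f → g * f * g = g → g * f = e → f * g = e' →
      f' * g' * f' = f' → g' * f' * g' = g' → g' * f' = e → f' * g' = e' →
      (∀ v ∈ matRange e, f.mulVec v = f'.mulVec v) → f = f' ∧ g = g') ∧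
    -- (v) fullness on isomorphisms
    (∀ e e' : Matrix (Fin n) (Fin n) A, IsIdempotentElem e → IsIdempotentElem e' →
      ∀ u : matRange e →ₗ[Aᵐᵒᵖ] matRange e', Function.Bijective u →
      ∃ f g : Matrix (Fin n) (Fin n) A,
        f * g * f = f ∧ g * f * g = g ∧ g * f = e ∧ f * g = e' ∧
        ∀ v : matRange e, (u v : Fin n → A) = f.mulVec (v : Fin n → A)) ∧
    -- (vi) essential surjectivity: any right A-module which is a direct summand of Aⁿ
    --      is isomorphic to e·Aⁿ for some idempotent e
    (∀ (M : Type u) [AddCommGroup M] [Module Aᵐᵒᵖ M],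
      (∃ π : (Fin n → A) →ₗ[Aᵐᵒᵖ] (Fin n → A),
        π ∘ₗ π = π ∧ Nonempty (M ≃ₗ[Aᵐᵒᵖ] LinearMap.range π)) →
      ∃ e : Matrix (Fin n) (Fin n) A, IsIdempotentElem e ∧
        Nonempty (M ≃ₗ[Aᵐᵒᵖ] matRange e)) := by
  refine ⟨?_, ?_, ?_, ?_, ?_, ?_, ?_⟩
  · -- (i)
    intro e he
    refine ⟨mv e, ?_, ?_⟩
    · apply LinearMap.ext
      intro v
      show e.mulVec (e.mulVec v) = e.mulVec v
      rw [Matrix.mulVec_mulVec, he]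
    · exact Submodule.ext fun x => Iff.rfl
  · -- (ii)
    exact fun e he v hv => fixed he hv
  · -- (ii')
    exact fun f f' v => (Matrix.mulVec_mulVec v f' f).symm
  · -- (iii)
    intro e e' f g he he' hfgf hgfg hgf hfg
    have hef : e' * f = f := by rw [← hfg, hfgf]
    have hge : e * g = g := by rw [← hgf, hgfg]
    refine ⟨?_, ?_, ?_, ?_⟩
    · intro v hv
      exact ⟨f.mulVec v, by rw [Matrix.mulVec_mulVec, hef]⟩
    · intro v hv
      exact ⟨g.mulVec v, by rw [Matrix.mulVec_mulVec, hge]⟩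
    · intro v hv
      rw [Matrix.mulVec_mulVec, hgf, fixed he hv]
    · intro v hv
      rw [Matrix.mulVec_mulVec, hfg, fixed he' hv]
  · -- (iv)
    intro e e' f g f' g' he he' hfgf hgfg hgf hfg hfgf' hgfg' hgf' hfg' hagree
    have hfe : f * e = f := by rw [← hgf, ← mul_assoc, hfgf]
    have hfe' : f' * e = f' := by rw [← hgf', ← mul_assoc, hfgf']
    have hff : f = f' := by
      apply ext_mulVec
      intro x
      have h1 : f.mulVec x = f.mulVec (e.mulVec x) := by
        rw [Matrix.mulVec_mulVec, hfe]
      have h2 : f'.mulVec x = f'.mulVec (e.mulVec x) := by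
        rw [Matrix.mulVec_mulVec, hfe']
      rw [h1, h2, hagree (e.mulVec x) ⟨x, rfl⟩]
    refine ⟨hff, ?_⟩
    calc g = (g * f) * g := hgfg.symm
      _ = (g' * f') * g := by rw [hgf, hgf']
      _ = g' * (f' * g) := mul_assoc _ _ _
      _ = g' * (f * g) := by rw [hff]
      _ = g' * (f' * g') := by rw [hfg, hfg']
      _ = (g' * f') * g' := (mul_assoc _ _ _).symm
      _ = g' := hgfg'
  · -- (v)
    intro e e' he he' u hu
    set uE := LinearEquiv.ofBijective u hu with huE
    set f := fmat u with hfdef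
    set g := fmat (uE.symm.toLinearMap) with hgdef
    have hfmem : ∀ x, f.mulVec x ∈ matRange e' := by
      intro x
      rw [repr u x]
      exact (u ⟨e.mulVec x, ⟨x, rfl⟩⟩).2
    have hgmem : ∀ x, g.mulVec x ∈ matRange e := by
      intro x
      rw [repr uE.symm.toLinearMap x]
      exact (uE.symm ⟨e'.mulVec x, ⟨x, rfl⟩⟩).2
    have hgf : g * f = e := by
      apply ext_mulVec
      intro x
      rw [← Matrix.mulVec_mulVec, repr u x]
      have hmem : ((u ⟨e.mulVec x, ⟨x, rfl⟩⟩ : matRange e') : Fin n → A) ∈ matRange e' :=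
        (u ⟨e.mulVec x, ⟨x, rfl⟩⟩).2
      rw [repr uE.symm.toLinearMap]
      have heq : (⟨e'.mulVec ((u ⟨e.mulVec x, ⟨x, rfl⟩⟩ : matRange e') : Fin n → A),
          ⟨_, rfl⟩⟩ : matRange e') = u ⟨e.mulVec x, ⟨x, rfl⟩⟩ :=
        Subtype.ext (fixed he' hmem)
      rw [heq]
      show ((uE.symm (uE ⟨e.mulVec x, ⟨x, rfl⟩⟩) : matRange e) : Fin n → A) = e.mulVec x
      rw [uE.symm_apply_apply]
    have hfg : f * g = e' := by
      apply ext_mulVec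
      intro x
      rw [← Matrix.mulVec_mulVec, repr uE.symm.toLinearMap x]
      have hmem : ((uE.symm ⟨e'.mulVec x, ⟨x, rfl⟩⟩ : matRange e) : Fin n → A) ∈ matRange e :=
        (uE.symm ⟨e'.mulVec x, ⟨x, rfl⟩⟩).2
      rw [repr u]
      have heq : (⟨e.mulVec ((uE.symm.toLinearMap ⟨e'.mulVec x, ⟨x, rfl⟩⟩ : matRange e) : Fin n → A),
          ⟨_, rfl⟩⟩ : matRange e) = uE.symm.toLinearMap ⟨e'.mulVec x, ⟨x, rfl⟩⟩ :=
        Subtype.ext (fixed he hmem)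
      rw [heq]
      show ((uE (uE.symm ⟨e'.mulVec x, ⟨x, rfl⟩⟩) : matRange e') : Fin n → A) = e'.mulVec x
      rw [uE.apply_symm_apply]
    have hef : e' * f = f := by
      apply ext_mulVec
      intro x
      rw [← Matrix.mulVec_mulVec]
      exact fixed he' (hfmem x)
    have hge : e * g = g := by
      apply ext_mulVec
      intro x
      rw [← Matrix.mulVec_mulVec]
      exact fixed he (hgmem x)
    refine ⟨f, g, ?_, ?_, hgf, hfg, ?_⟩
    · rw [hfg, hef]
    · rw [hgf, hge]
    · intro v
      rw [repr u (v : Fin n → A)]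
      congr 1
      exact congrArg u (Subtype.ext (fixed he v.2)).symm
  · -- (vi)
    intro M _ _ ⟨π, hππ, ⟨iso⟩⟩
    set e : Matrix (Fin n) (Fin n) A := Matrix.of fun i j => π (Pi.single j 1) i with hedef
    have hmv : ∀ v, e.mulVec v = π v := by
      intro v
      have hv : v = ∑ j, op (v j) • Pi.single j (1 : A) := by
        ext i
        simp [Pi.single_apply, MulOpposite.smul_eq_mul_unop, Finset.sum_apply]
      ext i
      conv_rhs => rw [hv]
      rw [map_sum]
      simp only [map_smul, Finset.sum_apply, Pi.smul_apply, MulOpposite.smul_eq_mul_unop,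
        unop_op, Matrix.mulVec, dotProduct, hedef, Matrix.of_apply]
    have he : IsIdempotentElem e := by
      apply ext_mulVec
      intro x
      rw [← Matrix.mulVec_mulVec]
      simp only [hmv]
      exact LinearMap.congr_fun hππ x
    have hrange : matRange e = LinearMap.range π := by
      ext v
      constructor
      · rintro ⟨w, rfl⟩
        exact ⟨w, (hmv w).symm⟩
      · rintro ⟨w, rfl⟩
        exact ⟨w, hmv w⟩
    exact ⟨e, he, ⟨iso.trans (LinearEquiv.ofEq _ _ hrange.symm)⟩⟩
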